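/- Let p ≥ 1 and n ≥ 2 be integers and x, y > 0 real numbers. Let Z be the (p+n)×n matrix whose first p rows have all entries equal to x and whose last n rows have all entries equal to y, let Q = A + E be the associated symmetric matrix with diagonal part A, and set q1 = n x + n x², q2 = n y + n y², q3 = (p x + n y) + p x² + n y² (the three distinct diagonal entries of Q). Then the only nonvanishing correction term in the diagonal expansion of det Q is S_{2n+p−3} = −p(n−1)·q1^{p−1}·q2^{n}·q3^{n−2}·(x + x²)² − n(n−1)·q1^{p}·q2^{n−1}·q3^{n−2}·(y + y²)². -/

import Mathlib

/-- The `(m+n−1) × (m+n−1)` symmetric matrix `Q` associated to an `m × n` matrix `Z`. -/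
noncomputable def Qmat {m n : ℕ} (z : Fin m → Fin n → ℝ) :
    Matrix (Fin (m + n - 1)) (Fin (m + n - 1)) ℝ :=
  Matrix.of fun i j =>
    if hi : (i : ℕ) < m then
      if hj : (j : ℕ) < m then
        if i = j then ∑ k : Fin n, (z ⟨i, hi⟩ k + z ⟨i, hi⟩ k ^ 2) else 0
      else
        z ⟨i, hi⟩ ⟨(j : ℕ) - m, by have := j.isLt; omega⟩ ^ 2
          + z ⟨i, hi⟩ ⟨(j : ℕ) - m, by have := j.isLt; omega⟩
    else
      if hj : (j : ℕ) < m then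
        z ⟨j, hj⟩ ⟨(i : ℕ) - m, by have := i.isLt; omega⟩ ^ 2
          + z ⟨j, hj⟩ ⟨(i : ℕ) - m, by have := i.isLt; omega⟩
      else
        if i = j then
          ∑ l : Fin m, (z l ⟨(i : ℕ) - m, by have := i.isLt; omega⟩
            + z l ⟨(i : ℕ) - m, by have := i.isLt; omega⟩ ^ 2)
        else 0

/-- The principal minor of `E` on the index set `T`. -/
noncomputable def principalMinor {N : ℕ} (E : Matrix (Fin N) (Fin N) ℝ)
    (T : Finset (Fin N)) : ℝ :=
  (E.submatrix (T.orderEmbOfFin rfl) (T.orderEmbOfFin rfl)).det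

/-- The term `S_k` of the diagonal expansion of `det(A + E)` with `A = diag(a)`. -/
noncomputable def Sterm {N : ℕ} (a : Fin N → ℝ) (E : Matrix (Fin N) (Fin N) ℝ)
    (k : ℕ) : ℝ :=
  ∑ S ∈ Finset.powersetCard k (Finset.univ : Finset (Fin N)),
    (∏ i ∈ S, a i) * principalMinor E Sᶜ

/-- The `(p+n) × n` matrix whose first `p` rows are constantly `x` and whose last `n`
rows are constantly `y`. -/
def rowZ (p n : ℕ) (x y : ℝ) : Fin (p + n) → Fin n → ℝ :=
  fun i _ => if (i : ℕ) < p then x else y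

open Finset


lemma sum_range3 (p n m : ℕ) (u v w : ℝ) (f : ℕ → ℝ)
    (h1 : ∀ l, l < p → f l = u) (h2 : ∀ l, p ≤ l → l < p + n → f l = v)
    (h3 : ∀ l, p + n ≤ l → f l = w) :
    ∑ l ∈ range (p + n + m), f l = p * u + n * v + m * w := by
  rw [Finset.sum_range_add, Finset.sum_range_add]
  rw [Finset.sum_congr rfl (fun l hl => h1 l (mem_range.mp hl)),
    Finset.sum_congr rfl (fun l hl => h2 (p + l) (Nat.le_add_right _ _)
      (by have := mem_range.mp hl; omega)),
    Finset.sum_congr rfl (fun l hl => h3 (p + n + l) (Nat.le_add_right _ _))]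
  simp [mul_comm]

lemma prod_range3 (p n m : ℕ) (u v w : ℝ) (f : ℕ → ℝ)
    (h1 : ∀ l, l < p → f l = u) (h2 : ∀ l, p ≤ l → l < p + n → f l = v)
    (h3 : ∀ l, p + n ≤ l → f l = w) :
    ∏ l ∈ range (p + n + m), f l = u ^ p * v ^ n * w ^ m := by
  rw [Finset.prod_range_add, Finset.prod_range_add]
  rw [Finset.prod_congr rfl (fun l hl => h1 l (mem_range.mp hl)),
    Finset.prod_congr rfl (fun l hl => h2 (p + l) (Nat.le_add_right _ _)
      (by have := mem_range.mp hl; omega)),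
    Finset.prod_congr rfl (fun l hl => h3 (p + n + l) (Nat.le_add_right _ _))]
  simp

lemma Sterm_compl {N : ℕ} (a : Fin N → ℝ) (E : Matrix (Fin N) (Fin N) ℝ) (k : ℕ)
    (hk : k ≤ N) :
    Sterm a E (N - k) =
      ∑ T ∈ powersetCard k (univ : Finset (Fin N)), (∏ i ∈ Tᶜ, a i) * principalMinor E T := by
  classical
  unfold Sterm
  refine Finset.sum_nbij' (i := fun S => Sᶜ) (j := fun T => Tᶜ) ?_ ?_ ?_ ?_ ?_
  · intro S hS
    rw [mem_powersetCard_univ] at *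
    rw [card_compl, Fintype.card_fin]
    omega
  · intro T hT
    rw [mem_powersetCard_univ] at *
    rw [card_compl, Fintype.card_fin]
    omega
  · intro S _; exact compl_compl S
  · intro T _; exact compl_compl T
  · intro S _; rw [compl_compl]

lemma Q_diag (p n : ℕ) (x y : ℝ) (i : Fin ((p + n) + n - 1)) :
    Qmat (rowZ p n x y) i i =
      if (i : ℕ) < p then (n : ℝ) * (x + x ^ 2)
      else if (i : ℕ) < p + n then (n : ℝ) * (y + y ^ 2)
      else (p : ℝ) * (x + x ^ 2) + (n : ℝ) * (y + y ^ 2) := by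
  by_cases hi : (i : ℕ) < p + n
  · rw [Qmat, Matrix.of_apply, dif_pos hi, dif_pos hi, if_pos rfl]
    by_cases hip : (i : ℕ) < p
    · rw [if_pos hip]
      simp only [rowZ, hip, if_true]
      rw [Finset.sum_const, card_univ, Fintype.card_fin, nsmul_eq_mul]
    · rw [if_neg hip, if_pos hi]
      simp only [rowZ, hip, if_false]
      rw [Finset.sum_const, card_univ, Fintype.card_fin, nsmul_eq_mul]
  · rw [Qmat, Matrix.of_apply, dif_neg hi, dif_neg hi, if_pos rfl,
      if_neg (by omega : ¬ (i : ℕ) < p), if_neg hi]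
    have : ∀ l : Fin (p + n),
        (rowZ p n x y l ⟨(i : ℕ) - (p + n), by have := i.isLt; omega⟩
          + rowZ p n x y l ⟨(i : ℕ) - (p + n), by have := i.isLt; omega⟩ ^ 2)
        = if (l : ℕ) < p then (x + x ^ 2) else (y + y ^ 2) := by
      intro l
      simp only [rowZ]
      split_ifs <;> ring
    rw [Finset.sum_congr rfl (fun l _ => this l)]
    rw [Fin.sum_univ_eq_sum_range (fun l => if l < p then (x + x ^ 2) else (y + y ^ 2))]
    rw [show p + n = p + n + 0 by omega]
    rw [sum_range3 p n 0 (x + x ^ 2) (y + y ^ 2) (y + y ^ 2) _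
      (fun l hl => by rw [if_pos hl])
      (fun l hl1 hl2 => by rw [if_neg (by omega)])
      (fun l hl => by rw [if_neg (by omega)])]
    ring

lemma Q_off (p n : ℕ) (x y : ℝ) (i j : Fin ((p + n) + n - 1))
    (hi : (i : ℕ) < p + n) (hj : ¬ (j : ℕ) < p + n) :
    Qmat (rowZ p n x y) i j =
      (if (i : ℕ) < p then x else y) ^ 2 + (if (i : ℕ) < p then x else y) ∧
    Qmat (rowZ p n x y) j i =
      (if (i : ℕ) < p then x else y) ^ 2 + (if (i : ℕ) < p then x else y) := by
  constructor
  · rw [Qmat, Matrix.of_apply, dif_pos hi, dif_neg hj]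
    simp [rowZ]
  · rw [Qmat, Matrix.of_apply, dif_neg hj, dif_pos hi]
    simp [rowZ]

lemma Q_zero (p n : ℕ) (x y : ℝ) (i j : Fin ((p + n) + n - 1)) (hij : i ≠ j)
    (h : ((i : ℕ) < p + n ↔ (j : ℕ) < p + n)) :
    Qmat (rowZ p n x y) i j = 0 := by
  by_cases hi : (i : ℕ) < p + n
  · rw [Qmat, Matrix.of_apply, dif_pos hi, dif_pos (h.mp hi), if_neg hij]
  · rw [Qmat, Matrix.of_apply, dif_neg hi, dif_neg (fun hj => hi (h.mpr hj)), if_neg hij]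
lemma pm_pair {N : ℕ} (E : Matrix (Fin N) (Fin N) ℝ) (i j : Fin N) (hij : i ≠ j) :
    principalMinor E {i, j} = E i i * E j j - E i j * E j i := by
  classical
  set T : Finset (Fin N) := {i, j} with hT
  have h2 : T.card = 2 := card_pair hij
  set f := T.orderEmbOfFin (rfl : T.card = T.card) with hf
  set g : Fin 2 → Fin N := fun k => f (finCongr h2.symm k) with hg
  have hgmem : ∀ k, g k ∈ T := fun k => T.orderEmbOfFin_mem rfl _
  have hgne : g 0 ≠ g 1 := by
    intro h
    exact absurd ((finCongr h2.symm).injective (f.injective h)) (by decide)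
  have key : principalMinor E T = E (g 0) (g 0) * E (g 1) (g 1) - E (g 0) (g 1) * E (g 1) (g 0) := by
    unfold principalMinor
    rw [← Matrix.det_submatrix_equiv_self (finCongr h2.symm), Matrix.submatrix_submatrix,
      Matrix.det_fin_two]
    simp [Function.comp, hg]
    rfl
  rw [key]
  have h0 : g 0 = i ∨ g 0 = j := by have := hgmem 0; simpa [hT] using this
  have h1 : g 1 = i ∨ g 1 = j := by have := hgmem 1; simpa [hT] using this
  rcases h0 with h0 | h0 <;> rcases h1 with h1 | h1 <;>
    first
      | (exfalso; exact hgne (h0.trans h1.symm))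
      | (rw [h0, h1]; try ring)

lemma sum_pairs {N : ℕ} (F : Finset (Fin N) → ℝ) :
    ∑ T ∈ powersetCard 2 (univ : Finset (Fin N)), F T
      = ∑ q ∈ univ.filter (fun q : Fin N × Fin N => q.1 < q.2), F {q.1, q.2} := by
  classical
  refine (Finset.sum_bij (i := fun q _ => ({q.1, q.2} : Finset (Fin N))) ?_ ?_ ?_ ?_).symm
  · intro q hq
    simp only [mem_filter] at hq
    simp [mem_powersetCard_univ, card_pair hq.2.ne]
  · intro q hq q' hq' h
    simp only [mem_filter, mem_univ, true_and] at hq hq'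
    replace h : ({q.1, q.2} : Finset (Fin N)) = {q'.1, q'.2} := h
    have h1 : q.1 ∈ ({q'.1, q'.2} : Finset (Fin N)) := by rw [← h]; simp
    have h2 : q.2 ∈ ({q'.1, q'.2} : Finset (Fin N)) := by rw [← h]; simp
    simp only [mem_insert, mem_singleton] at h1 h2
    rcases h1 with h1 | h1 <;> rcases h2 with h2 | h2
    · exfalso; have := hq; rw [h1, h2] at this; exact absurd this (lt_irrefl _)
    · exact Prod.ext h1 h2
    · exfalso; rw [h1, h2] at hq; exact absurd hq' (lt_asymm hq)
    · exfalso; have := hq; rw [h1, h2] at this; exact absurd this (lt_irrefl _)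
  · intro T hT
    rw [mem_powersetCard_univ] at hT
    obtain ⟨a, b, hab, rfl⟩ := Finset.card_eq_two.mp hT
    rcases lt_or_gt_of_ne hab with h | h
    · exact ⟨(a, b), by simp [h], rfl⟩
    · exact ⟨(b, a), by simp [h], by rw [pair_comm]⟩
  · intro q hq
    rfl



/-- For the row-constant matrix `Z` with diagonal values `q1 = nx + nx²`,
`q2 = ny + ny²`, `q3 = (px + ny) + px² + ny²` of `Q`, the only nonvanishing correction
term in the diagonal expansion of `det Q` is
`S_{2n+p−3} = −p(n−1) q1^{p−1} q2^{n} q3^{n−2} (x+x²)² − n(n−1) q1^{p} q2^{n−1} q3^{n−2} (y+y²)²`. -/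
theorem Sterm_rowConstant_value (p n : ℕ) (hp : 1 ≤ p) (hn : 2 ≤ n)
    (x y : ℝ) (hx : 0 < x) (hy : 0 < y)
    (Q : Matrix (Fin ((p + n) + n - 1)) (Fin ((p + n) + n - 1)) ℝ)
    (hQ : Q = Qmat (rowZ p n x y))
    (E : Matrix (Fin ((p + n) + n - 1)) (Fin ((p + n) + n - 1)) ℝ)
    (hE : E = Q - Matrix.diagonal (fun i => Q i i))
    (q1 q2 q3 : ℝ)
    (hq1 : q1 = (n : ℝ) * x + (n : ℝ) * x ^ 2)
    (hq2 : q2 = (n : ℝ) * y + (n : ℝ) * y ^ 2)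
    (hq3 : q3 = ((p : ℝ) * x + (n : ℝ) * y) + (p : ℝ) * x ^ 2 + (n : ℝ) * y ^ 2) :
    Sterm (fun i => Q i i) E (2 * n + p - 3)
      = -(p : ℝ) * ((n : ℝ) - 1) * q1 ^ (p - 1) * q2 ^ n * q3 ^ (n - 2) * (x + x ^ 2) ^ 2
        - (n : ℝ) * ((n : ℝ) - 1) * q1 ^ p * q2 ^ (n - 1) * q3 ^ (n - 2)
          * (y + y ^ 2) ^ 2 := by
  classical
  have hn0 : (0 : ℝ) < (n : ℝ) := by exact_mod_cast (by omega : 0 < n)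
  have hp0 : (0 : ℝ) < (p : ℝ) := by exact_mod_cast (by omega : 0 < p)
  have hq1pos : 0 < q1 := by
    rw [hq1]; exact add_pos (mul_pos hn0 hx) (mul_pos hn0 (pow_pos hx 2))
  have hq2pos : 0 < q2 := by
    rw [hq2]; exact add_pos (mul_pos hn0 hy) (mul_pos hn0 (pow_pos hy 2))
  have hq3pos : 0 < q3 := by
    rw [hq3]
    have h1 := mul_pos hp0 hx
    have h2 := mul_pos hn0 hy
    have h3 := mul_pos hp0 (pow_pos hx 2)
    have h4 := mul_pos hn0 (pow_pos hy 2)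
    linarith
  have ha : ∀ i : Fin ((p + n) + n - 1), Q i i =
      if (i : ℕ) < p then q1 else if (i : ℕ) < p + n then q2 else q3 := by
    intro i
    rw [hQ, Q_diag]
    split_ifs
    · rw [hq1]; ring
    · rw [hq2]; ring
    · rw [hq3]; ring
  have hapos : ∀ i, 0 < Q i i := by
    intro i; rw [ha]; split_ifs <;> assumption
  have hN : (p + n) + n - 1 = p + n + (n - 1) := by omega
  have hProd : ∏ i : Fin ((p + n) + n - 1), Q i i = q1 ^ p * q2 ^ n * q3 ^ (n - 1) := by
    rw [Finset.prod_congr rfl (fun i _ => ha i),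
      Fin.prod_univ_eq_prod_range (fun l => if l < p then q1 else if l < p + n then q2 else q3),
      hN]
    exact prod_range3 p n (n - 1) q1 q2 q3 _
      (fun l hl => by rw [if_pos hl])
      (fun l hl1 hl2 => by rw [if_neg (by omega), if_pos hl2])
      (fun l hl => by rw [if_neg (by omega), if_neg (by omega)])
  have hEd : ∀ i, E i i = 0 := by
    intro i; rw [hE]; simp
  have hEo : ∀ i j, i ≠ j → E i j = Q i j := by
    intro i j h; rw [hE]
    simp [Matrix.sub_apply, Matrix.diagonal_apply_ne _ h]
  have hcard : 2 * n + p - 3 = (p + n) + n - 1 - 2 := by omega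
  rw [hcard, Sterm_compl _ _ 2 (by omega), sum_pairs]
  have hterm : ∀ q : Fin ((p + n) + n - 1) × Fin ((p + n) + n - 1), q.1 < q.2 →
      (∏ i ∈ (({q.1, q.2} : Finset _))ᶜ, Q i i) * principalMinor E {q.1, q.2}
        = if (q.1 : ℕ) < p + n ∧ p + n ≤ (q.2 : ℕ) then
            (if (q.1 : ℕ) < p then
              -((q1 ^ p * q2 ^ n * q3 ^ (n - 1)) / (q1 * q3)) * (x ^ 2 + x) ^ 2
            else
              -((q1 ^ p * q2 ^ n * q3 ^ (n - 1)) / (q2 * q3)) * (y ^ 2 + y) ^ 2)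
          else 0 := by
    intro q hlt
    have hij : q.1 ≠ q.2 := ne_of_lt hlt
    have hltn : (q.1 : ℕ) < (q.2 : ℕ) := hlt
    rw [pm_pair E q.1 q.2 hij, hEd, hEd, hEo _ _ hij, hEo _ _ hij.symm]
    by_cases h1 : (q.1 : ℕ) < p + n
    · by_cases h2 : (q.2 : ℕ) < p + n
      · rw [hQ, Q_zero p n x y _ _ hij (iff_of_true h1 h2),
          if_neg (fun hc => absurd hc.2 (by omega))]
        ring
      · obtain ⟨e1, e2⟩ := Q_off p n x y q.1 q.2 h1 h2
        have hprodc : ∏ i ∈ (({q.1, q.2} : Finset _))ᶜ, Q i i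
            = q1 ^ p * q2 ^ n * q3 ^ (n - 1) / (Q q.1 q.1 * Q q.2 q.2) := by
          have hsplit := Finset.prod_mul_prod_compl ({q.1, q.2} : Finset _) (fun i => Q i i)
          rw [Finset.prod_pair hij, hProd] at hsplit
          rw [eq_div_iff (ne_of_gt (mul_pos (hapos q.1) (hapos q.2)))]
          linear_combination hsplit
        have h2' : p + n ≤ (q.2 : ℕ) := not_lt.mp h2
        have hq2p : ¬ (q.2 : ℕ) < p := by omega
        have hconj : (q.1 : ℕ) < p + n ∧ p + n ≤ (q.2 : ℕ) := ⟨h1, h2'⟩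
        rw [hprodc, hQ, e1, e2, ← hQ, ha q.1, ha q.2]
        by_cases hp1 : (q.1 : ℕ) < p
        · simp only [if_pos hconj, if_pos hp1, if_neg hq2p, if_neg h2, if_pos h1]
          ring
        · simp only [if_pos hconj, if_neg hp1, if_pos h1, if_neg hq2p, if_neg h2]
          ring
    · have h2 : ¬ (q.2 : ℕ) < p + n := by omega
      rw [hQ, Q_zero p n x y _ _ hij (iff_of_false h1 h2),
        if_neg (fun hc => h1 hc.1)]
      ring
  rw [Finset.sum_congr rfl (fun q hq => hterm q (Finset.mem_filter.mp hq).2)]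
  rw [Finset.sum_filter]
  have hdrop : ∀ q : Fin ((p + n) + n - 1) × Fin ((p + n) + n - 1),
      (if q.1 < q.2 then
        (if (q.1 : ℕ) < p + n ∧ p + n ≤ (q.2 : ℕ) then
            (if (q.1 : ℕ) < p then
              -((q1 ^ p * q2 ^ n * q3 ^ (n - 1)) / (q1 * q3)) * (x ^ 2 + x) ^ 2
            else
              -((q1 ^ p * q2 ^ n * q3 ^ (n - 1)) / (q2 * q3)) * (y ^ 2 + y) ^ 2)
          else 0)
      else 0)
      = (if (q.1 : ℕ) < p + n ∧ p + n ≤ (q.2 : ℕ) then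
            (if (q.1 : ℕ) < p then
              -((q1 ^ p * q2 ^ n * q3 ^ (n - 1)) / (q1 * q3)) * (x ^ 2 + x) ^ 2
            else
              -((q1 ^ p * q2 ^ n * q3 ^ (n - 1)) / (q2 * q3)) * (y ^ 2 + y) ^ 2)
          else 0) := by
    intro q
    by_cases h : q.1 < q.2
    · rw [if_pos h]
    · rw [if_neg h, if_neg]
      intro hc
      exact h (show q.1 < q.2 from by
        have : (q.1 : ℕ) < (q.2 : ℕ) := by omega
        exact this)
  rw [Finset.sum_congr rfl (fun q _ => hdrop q)]
  rw [Fintype.sum_prod_type]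
  dsimp only
  have hinner : ∀ i : Fin ((p + n) + n - 1),
      (∑ j : Fin ((p + n) + n - 1),
        if (i : ℕ) < p + n ∧ p + n ≤ (j : ℕ) then
            (if (i : ℕ) < p then
              -((q1 ^ p * q2 ^ n * q3 ^ (n - 1)) / (q1 * q3)) * (x ^ 2 + x) ^ 2
            else
              -((q1 ^ p * q2 ^ n * q3 ^ (n - 1)) / (q2 * q3)) * (y ^ 2 + y) ^ 2)
          else 0)
      = if (i : ℕ) < p then
          ((n : ℝ) - 1) * (-((q1 ^ p * q2 ^ n * q3 ^ (n - 1)) / (q1 * q3)) * (x ^ 2 + x) ^ 2)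
        else if (i : ℕ) < p + n then
          ((n : ℝ) - 1) * (-((q1 ^ p * q2 ^ n * q3 ^ (n - 1)) / (q2 * q3)) * (y ^ 2 + y) ^ 2)
        else 0 := by
    intro i
    by_cases h1 : (i : ℕ) < p + n
    · set c : ℝ := (if (i : ℕ) < p then
              -((q1 ^ p * q2 ^ n * q3 ^ (n - 1)) / (q1 * q3)) * (x ^ 2 + x) ^ 2
            else
              -((q1 ^ p * q2 ^ n * q3 ^ (n - 1)) / (q2 * q3)) * (y ^ 2 + y) ^ 2) with hc
      have hj : ∀ j : Fin ((p + n) + n - 1),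
          (if (i : ℕ) < p + n ∧ p + n ≤ (j : ℕ) then c else 0)
            = if p + n ≤ (j : ℕ) then c else 0 := by
        intro j
        by_cases h2 : p + n ≤ (j : ℕ)
        · rw [if_pos ⟨h1, h2⟩, if_pos h2]
        · rw [if_neg (fun hc' => h2 hc'.2), if_neg h2]
      rw [Finset.sum_congr rfl (fun j _ => hj j),
        Fin.sum_univ_eq_sum_range (fun l => if p + n ≤ l then c else 0),
        show Finset.range ((p + n) + n - 1) = Finset.range (p + n + (n - 1)) from by rw [hN],
        sum_range3 p n (n - 1) 0 0 c _
          (fun l hl => by rw [if_neg (by omega)])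
          (fun l hl1 hl2 => by rw [if_neg (by omega)])
          (fun l hl => by rw [if_pos hl])]
      rw [Nat.cast_sub (by omega : 1 ≤ n), Nat.cast_one]
      by_cases hp1 : (i : ℕ) < p
      · rw [if_pos hp1, hc, if_pos hp1]; ring
      · rw [if_neg hp1, if_pos h1, hc, if_neg hp1]; ring
    · have hip : ¬ (i : ℕ) < p := by omega
      conv_rhs => rw [if_neg hip, if_neg h1]
      apply Finset.sum_eq_zero
      intro j _
      exact if_neg (fun hc : (i : ℕ) < p + n ∧ p + n ≤ (j : ℕ) => h1 hc.1)
  rw [Finset.sum_congr rfl (fun i _ => hinner i)]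
  rw [Fin.sum_univ_eq_sum_range (fun l => if l < p then
          ((n : ℝ) - 1) * (-((q1 ^ p * q2 ^ n * q3 ^ (n - 1)) / (q1 * q3)) * (x ^ 2 + x) ^ 2)
        else if l < p + n then
          ((n : ℝ) - 1) * (-((q1 ^ p * q2 ^ n * q3 ^ (n - 1)) / (q2 * q3)) * (y ^ 2 + y) ^ 2)
        else 0), hN,
    sum_range3 p n (n - 1)
      (((n : ℝ) - 1) * (-((q1 ^ p * q2 ^ n * q3 ^ (n - 1)) / (q1 * q3)) * (x ^ 2 + x) ^ 2))
      (((n : ℝ) - 1) * (-((q1 ^ p * q2 ^ n * q3 ^ (n - 1)) / (q2 * q3)) * (y ^ 2 + y) ^ 2))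
      0 _
      (fun l hl => by rw [if_pos hl])
      (fun l hl1 hl2 => by rw [if_neg (by omega), if_pos hl2])
      (fun l hl => by rw [if_neg (by omega), if_neg (by omega)])]
  have e1 : q1 ^ p = q1 ^ (p - 1) * q1 := by
    conv_lhs => rw [show p = (p - 1) + 1 by omega]
    rw [pow_succ]
  have e2 : q2 ^ n = q2 ^ (n - 1) * q2 := by
    conv_lhs => rw [show n = (n - 1) + 1 by omega]
    rw [pow_succ]
  have e3 : q3 ^ (n - 1) = q3 ^ (n - 2) * q3 := by
    conv_lhs => rw [show n - 1 = (n - 2) + 1 by omega]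
    rw [pow_succ]
  rw [e1, e2, e3]
  field_simp
  ring
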